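/- Let M be a compact metric space, e : ℕ → M an injective map with dense range, P a Borel probability measure on M, and g : M → [a,b] continuous with a < b; set v(n) = g(e(n)). Suppose v has a ν-distribution function F that is absolutely continuous (its Lebesgue–Stieltjes measure λ_F is absolutely continuous with respect to Lebesgue measure). If f : [a,b] → [a,b] is continuous and λ(f⁻¹({x})) = 0 for every x ∈ [a,b] (λ = Lebesgue measure), then the sequence {f(v(n))} has a continuous ν-distribution function. -/

import Mathlib

open MeasureTheory Set Filter Topology

/-- Let `g : M → [a,b]` be continuous (`a < b`), `v(n) = g(e(n))`, and suppose `v`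
has a `ν`-distribution function `F` that is absolutely continuous (its
Lebesgue–Stieltjes measure is absolutely continuous w.r.t. Lebesgue measure).
If `f : [a,b] → [a,b]` is continuous and `λ(f⁻¹({x})) = 0` for every `x ∈ [a,b]`,
then the sequence `{f(v(n))}` has a continuous `ν`-distribution function. -/
theorem stmt8 {M : Type*} [MetricSpace M] [CompactSpace M]
    [MeasurableSpace M] [BorelSpace M]
    (P : Measure M) [IsProbabilityMeasure P]
    (e : ℕ → M) (he : Function.Injective e) (hd : DenseRange e)
    (a b : ℝ) (hab : a < b)
    (g : M → ℝ) (hg : Continuous g) (hgmem : ∀ α : M, g α ∈ Set.Icc a b)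
    (F : StieltjesFunction ℝ) (hFcont : Continuous F)
    (hFdist : ∀ x : ℝ,
      P (closure (e '' {n : ℕ | g (e n) < x})) +
          P (closure (e '' {n : ℕ | g (e n) < x}ᶜ)) = 1 ∧
        (P (closure (e '' {n : ℕ | g (e n) < x}))).toReal = F x)
    (hFac : F.measure ≪ volume)
    (f : ℝ → ℝ) (hf : ContinuousOn f (Set.Icc a b))
    (hfmem : ∀ x ∈ Set.Icc a b, f x ∈ Set.Icc a b)
    (hfib : ∀ x : ℝ, volume (f ⁻¹' {x} ∩ Set.Icc a b) = 0) :
    ∃ G : ℝ → ℝ, Continuous G ∧ ∀ x : ℝ,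
      P (closure (e '' {n : ℕ | f (g (e n)) < x})) +
          P (closure (e '' {n : ℕ | f (g (e n)) < x}ᶜ)) = 1 ∧
        (P (closure (e '' {n : ℕ | f (g (e n)) < x}))).toReal = G x := by
  classical
  -- clamp to [a,b]
  set c : ℝ → ℝ := fun t => max a (min t b) with hcdef
  have hcmem : ∀ t, c t ∈ Icc a b := fun t =>
    ⟨le_max_left _ _, max_le hab.le (min_le_right _ _)⟩
  have hcid : ∀ t ∈ Icc a b, c t = t := by
    intro t ht
    simp only [hcdef, min_eq_left ht.2, max_eq_right ht.1]
  have hccont : Continuous c := continuous_const.max (continuous_id.min continuous_const)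
  set fc : ℝ → ℝ := fun t => f (c t) with hfcdef
  have hfccont : Continuous fc := hf.comp_continuous hccont hcmem
  set h : M → ℝ := fun m => fc (g m) with hhdef
  have hhcont : Continuous h := hfccont.comp hg
  have hgm : Measurable g := hg.measurable
  have hfcm : Measurable fc := hfccont.measurable
  have hhm : Measurable h := hhcont.measurable
  -- values of F
  have hF0 : ∀ x, x ≤ a → F x = 0 := by
    intro x hx
    have hset : {n : ℕ | g (e n) < x} = (∅ : Set ℕ) := by
      ext n
      simp only [mem_setOf_eq, mem_empty_iff_false, iff_false, not_lt]
      exact hx.trans (hgmem (e n)).1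
    have h2 := (hFdist x).2
    rw [hset] at h2
    simpa using h2.symm
  have hF1 : ∀ x, b < x → F x = 1 := by
    intro x hx
    have hset : {n : ℕ | g (e n) < x} = (univ : Set ℕ) := by
      ext n
      simp only [mem_setOf_eq, mem_univ, iff_true]
      exact lt_of_le_of_lt (hgmem (e n)).2 hx
    have h2 := (hFdist x).2
    rw [hset, image_univ, hd.closure_range] at h2
    simpa using h2.symm
  have hFbot : Tendsto F atBot (𝓝 (0 : ℝ)) := by
    have : (⇑F : ℝ → ℝ) =ᶠ[atBot] fun _ => (0 : ℝ) :=
      eventually_atBot.2 ⟨a, fun x hx => hF0 x hx⟩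
    exact Tendsto.congr' this.symm tendsto_const_nhds
  have hFtop : Tendsto F atTop (𝓝 (1 : ℝ)) := by
    have : (⇑F : ℝ → ℝ) =ᶠ[atTop] fun _ => (1 : ℝ) :=
      eventually_atTop.2 ⟨b + 1, fun x hx => hF1 x (by linarith)⟩
    exact Tendsto.congr' this.symm tendsto_const_nhds
  have hFIic : ∀ x, F.measure (Iic x) = ENNReal.ofReal (F x) := by
    intro x
    simpa using F.measure_Iic hFbot x
  -- the pushforward of P under g is the Stieltjes measure of F
  set Pg : Measure ℝ := Measure.map g P with hPgdef
  haveI : IsProbabilityMeasure Pg := Measure.isProbabilityMeasure_map hgm.aemeasurable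
  have himg : ∀ x : ℝ, e '' {n : ℕ | g (e n) < x} = g ⁻¹' (Iio x) ∩ range e := by
    intro x
    ext m
    constructor
    · rintro ⟨n, hn, rfl⟩
      exact ⟨hn, mem_range_self n⟩
    · rintro ⟨hm, ⟨n, rfl⟩⟩
      exact ⟨n, hm, rfl⟩
  have hofF : ∀ x, ENNReal.ofReal (F x) = P (closure (e '' {n : ℕ | g (e n) < x})) := by
    intro x
    rw [← (hFdist x).2, ENNReal.ofReal_toReal (measure_ne_top P _)]
  have hlow : ∀ x, Pg (Iio x) ≤ ENNReal.ofReal (F x) := by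
    intro x
    rw [hPgdef, Measure.map_apply hgm measurableSet_Iio, hofF x]
    refine measure_mono ?_
    rw [himg x]
    exact hd.open_subset_closure_inter (isOpen_Iio.preimage hg)
  have hup : ∀ x, ENNReal.ofReal (F x) ≤ Pg (Iic x) := by
    intro x
    rw [hPgdef, Measure.map_apply hgm measurableSet_Iic, hofF x]
    refine measure_mono ?_
    refine (IsClosed.closure_subset_iff (isClosed_Iic.preimage hg)).2 ?_
    rw [himg x]
    exact (inter_subset_left).trans (preimage_mono Iio_subset_Iic_self)
  have hseqx : ∀ x : ℝ, Tendsto (fun n : ℕ => x + 1 / (n + 1)) atTop (𝓝 x) := by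
    intro x
    have := tendsto_one_div_add_atTop_nhds_zero_nat (𝕜 := ℝ)
    simpa using tendsto_const_nhds.add this
  have hPgIic : ∀ x, Pg (Iic x) = ENNReal.ofReal (F x) := by
    intro x
    refine le_antisymm ?_ (hup x)
    have htend : Tendsto (fun n : ℕ => ENNReal.ofReal (F (x + 1 / (n + 1)))) atTop
        (𝓝 (ENNReal.ofReal (F x))) :=
      (ENNReal.continuous_ofReal.tendsto _).comp ((hFcont.tendsto x).comp (hseqx x))
    refine ge_of_tendsto' htend fun n => ?_
    refine le_trans (measure_mono ?_) (hlow (x + 1 / (n + 1)))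
    intro t ht
    rw [mem_Iic] at ht
    rw [mem_Iio]
    have hpos : (0 : ℝ) < 1 / (n + 1 : ℝ) := by positivity
    linarith
  have hPgF : Pg = F.measure :=
    Measure.ext_of_Iic Pg F.measure fun x => by rw [hPgIic x, hFIic x]
  -- F.measure vanishes outside [a,b]
  have hIccc : F.measure (Icc a b)ᶜ = 0 := by
    have hcompl : (Icc a b)ᶜ = Iio a ∪ Ioi b := by
      ext t
      simp only [mem_compl_iff, mem_Icc, not_and_or, not_le, mem_union, mem_Iio, mem_Ioi]
    rw [hcompl]
    refine measure_union_null ?_ ?_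
    · refine measure_mono_null Iio_subset_Iic_self ?_
      rw [hFIic a, hF0 a le_rfl]
      simp
    · have hFb : F b = 1 := by
        have h1 : Tendsto (fun n : ℕ => F (b + 1 / (n + 1))) atTop (𝓝 (F b)) :=
          (hFcont.tendsto b).comp (hseqx b)
        have h2 : (fun n : ℕ => F (b + 1 / (n + 1))) = fun _ => (1 : ℝ) := by
          funext n
          refine hF1 _ ?_
          have hpos : (0 : ℝ) < 1 / (n + 1 : ℝ) := by positivity
          linarith
        rw [h2] at h1
        exact tendsto_nhds_unique h1 tendsto_const_nhds
      have hsub : Ioi b ⊆ ⋃ n : ℕ, Ioc b (b + n + 1) := by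
        intro t ht
        refine mem_iUnion.2 ⟨⌈t - b⌉₊, ht, ?_⟩
        have := Nat.le_ceil (t - b)
        linarith
      refine measure_mono_null hsub (measure_iUnion_null fun n => ?_)
      have hn0 : (0 : ℝ) ≤ n := Nat.cast_nonneg n
      rw [F.measure_Ioc, hF1 (b + n + 1) (by linarith), hFb]
      simp
  -- fibers of fc are F.measure-null
  have hfib' : ∀ x : ℝ, F.measure (fc ⁻¹' {x}) = 0 := by
    intro x
    have hsub : fc ⁻¹' {x} ⊆ (f ⁻¹' {x} ∩ Icc a b) ∪ (Icc a b)ᶜ := by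
      intro t ht
      by_cases htI : t ∈ Icc a b
      · left
        refine ⟨?_, htI⟩
        have : fc t = f t := by rw [hfcdef]; simp only; rw [hcid t htI]
        simpa [← this] using ht
      · exact Or.inr htI
    exact measure_mono_null hsub (measure_union_null (hFac (hfib x)) hIccc)
  -- the pushforward under h
  set Ph : Measure ℝ := Measure.map h P with hPhdef
  haveI : IsProbabilityMeasure Ph := Measure.isProbabilityMeasure_map hhm.aemeasurable
  have hPhfc : Ph = Measure.map fc F.measure := by
    rw [← hPgF, hPgdef, Measure.map_map hfcm hgm]
    rfl
  have hatom : ∀ x : ℝ, Ph {x} = 0 := by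
    intro x
    rw [hPhfc, Measure.map_apply hfcm (measurableSet_singleton x)]
    exact hfib' x
  have hPhIic : ∀ x : ℝ, Ph (Iic x) = Ph (Iio x) := by
    intro x
    refine le_antisymm ?_ (measure_mono Iio_subset_Iic_self)
    rw [← Set.Iio_union_right]
    exact (measure_union_le _ _).trans (by rw [hatom x, add_zero])
  have hPhIci : ∀ x : ℝ, Ph (Ici x) = Ph (Ioi x) := by
    intro x
    refine le_antisymm ?_ (measure_mono Ioi_subset_Ici_self)
    rw [← Set.Ioi_union_left]
    exact (measure_union_le _ _).trans (by rw [hatom x, add_zero])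
  have hsplit : ∀ x : ℝ, Ph (Iio x) + Ph (Ici x) = 1 := by
    intro x
    rw [← measure_union (Iio_disjoint_Ici le_rfl) measurableSet_Ici, Iio_union_Ici]
    exact measure_univ
  -- the candidate distribution function
  refine ⟨fun x => (Ph (Iio x)).toReal, ?_, ?_⟩
  · -- continuity
    rw [Metric.continuous_iff]
    intro x ε hε
    have hInter : (⋂ n : ℕ, Icc (x - 1 / (n + 1)) (x + 1 / (n + 1))) = {x} := by
      ext y
      simp only [mem_iInter, mem_Icc, mem_singleton_iff]
      constructor
      · intro hy
        by_contra hne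
        obtain ⟨n, hn⟩ := exists_nat_one_div_lt (abs_pos.2 (sub_ne_zero.2 hne))
        have h1 := (hy n).1
        have h2 := (hy n).2
        have habs : |y - x| ≤ 1 / (n + 1 : ℝ) := abs_le.2 ⟨by linarith, by linarith⟩
        exact absurd habs (not_le.2 hn)
      · rintro rfl n
        have hpos : (0 : ℝ) ≤ 1 / (n + 1 : ℝ) := by positivity
        exact ⟨by linarith, by linarith⟩
    have htend : Tendsto (fun n : ℕ => Ph (Icc (x - 1 / (n + 1)) (x + 1 / (n + 1)))) atTop
        (𝓝 0) := by
      have := tendsto_measure_iInter_atTop (μ := Ph)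
        (s := fun n : ℕ => Icc (x - 1 / (n + 1)) (x + 1 / (n + 1)))
        (fun n => measurableSet_Icc.nullMeasurableSet)
        (fun m n hmn => by
          have hc : (m : ℝ) + 1 ≤ (n : ℝ) + 1 := by exact_mod_cast Nat.succ_le_succ hmn
          have h1 : (1 : ℝ) / (n + 1) ≤ 1 / (m + 1) :=
            one_div_le_one_div_of_le (by positivity) hc
          exact Icc_subset_Icc (by linarith) (by linarith))
        ⟨0, measure_ne_top _ _⟩
      rw [hInter, hatom x] at this
      exact this
    obtain ⟨n, hn⟩ := (htend.eventually (gt_mem_nhds (ENNReal.ofReal_pos.2 hε))).exists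
    set δ : ℝ := 1 / (n + 1 : ℝ) with hδdef
    have hδpos : (0 : ℝ) < δ := by positivity
    refine ⟨δ, hδpos, ?_⟩
    have hmono : ∀ u v : ℝ, u ≤ v → Ph (Iio u) ≤ Ph (Iio v) := fun u v huv =>
      measure_mono (Iio_subset_Iio huv)
    have hdiff : ∀ u v : ℝ, u ≤ v → x - δ ≤ u → v ≤ x + δ →
        (Ph (Iio v)).toReal - (Ph (Iio u)).toReal < ε := by
      intro u v huv hu hv
      have hsplit2 : Ph (Iio v) = Ph (Iio u) + Ph (Ico u v) := by
        rw [← measure_union ?_ measurableSet_Ico, Iio_union_Ico_eq_Iio huv]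
        exact Set.disjoint_left.2 fun t ht ht' => absurd ht'.1 (not_le.2 ht)
      rw [hsplit2, ENNReal.toReal_add (measure_ne_top _ _) (measure_ne_top _ _)]
      have hle : Ph (Ico u v) ≤ Ph (Icc (x - δ) (x + δ)) :=
        measure_mono (fun t ht => ⟨le_trans hu ht.1, le_trans ht.2.le hv⟩)
      have : (Ph (Ico u v)).toReal < ε := by
        have hlt : Ph (Ico u v) < ENNReal.ofReal ε := lt_of_le_of_lt hle hn
        exact ENNReal.toReal_lt_of_lt_ofReal hlt
      linarith
    intro y hy
    rw [Real.dist_eq] at hy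
    have hy1 : x - δ < y := by
      have := abs_lt.1 hy
      linarith [this.1]
    have hy2 : y < x + δ := by
      have := abs_lt.1 hy
      linarith [this.2]
    rw [Real.dist_eq]
    rcases le_total x y with hxy | hxy
    · have hnn : (Ph (Iio x)).toReal ≤ (Ph (Iio y)).toReal :=
        ENNReal.toReal_mono (measure_ne_top _ _) (hmono _ _ hxy)
      rw [abs_of_nonneg (by linarith)]
      exact hdiff x y hxy (by linarith) hy2.le
    · have hnn : (Ph (Iio y)).toReal ≤ (Ph (Iio x)).toReal :=
        ENNReal.toReal_mono (measure_ne_top _ _) (hmono _ _ hxy)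
      rw [abs_of_nonpos (by linarith)]
      have := hdiff y x hxy hy1.le (by linarith)
      linarith
  · -- the distribution property
    intro x
    have hSv : {n : ℕ | f (g (e n)) < x} = e ⁻¹' (h ⁻¹' Iio x) := by
      ext n
      simp only [mem_setOf_eq, mem_preimage, mem_Iio, hhdef, hfcdef]
      rw [hcid _ (hgmem (e n))]
    have hScv : {n : ℕ | f (g (e n)) < x}ᶜ = e ⁻¹' (h ⁻¹' Ici x) := by
      rw [hSv]
      ext n
      simp [not_lt]
    have himg1 : e '' {n : ℕ | f (g (e n)) < x} = h ⁻¹' Iio x ∩ range e := by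
      rw [hSv, image_preimage_eq_inter_range]
    have himg2 : e '' {n : ℕ | f (g (e n)) < x}ᶜ = h ⁻¹' Ici x ∩ range e := by
      rw [hScv, image_preimage_eq_inter_range]
    have hPh1 : ∀ s : Set ℝ, MeasurableSet s → Ph s = P (h ⁻¹' s) := fun s hs =>
      Measure.map_apply hhm hs
    -- bounds for the first closure
    have hcl1low : Ph (Iio x) ≤ P (closure (e '' {n : ℕ | f (g (e n)) < x})) := by
      rw [hPh1 _ measurableSet_Iio, himg1]
      exact measure_mono (hd.open_subset_closure_inter (isOpen_Iio.preimage hhcont))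
    have hcl1up : P (closure (e '' {n : ℕ | f (g (e n)) < x})) ≤ Ph (Iic x) := by
      rw [hPh1 _ measurableSet_Iic, himg1]
      refine measure_mono ?_
      refine (IsClosed.closure_subset_iff (isClosed_Iic.preimage hhcont)).2 ?_
      exact inter_subset_left.trans (preimage_mono Iio_subset_Iic_self)
    have hcl2low : Ph (Ioi x) ≤ P (closure (e '' {n : ℕ | f (g (e n)) < x}ᶜ)) := by
      rw [hPh1 _ measurableSet_Ioi, himg2]
      refine measure_mono ?_
      refine subset_trans ?_ (closure_mono (inter_subset_inter_left _
        (preimage_mono Ioi_subset_Ici_self)))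
      exact hd.open_subset_closure_inter (isOpen_Ioi.preimage hhcont)
    have hcl2up : P (closure (e '' {n : ℕ | f (g (e n)) < x}ᶜ)) ≤ Ph (Ici x) := by
      rw [hPh1 _ measurableSet_Ici, himg2]
      refine measure_mono ?_
      refine (IsClosed.closure_subset_iff (isClosed_Ici.preimage hhcont)).2 ?_
      exact inter_subset_left
    -- sum is at least one
    have hcup : (1 : ENNReal) ≤ P (closure (e '' {n : ℕ | f (g (e n)) < x})) +
        P (closure (e '' {n : ℕ | f (g (e n)) < x}ᶜ)) := by
      have hM : closure (e '' {n : ℕ | f (g (e n)) < x}) ∪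
          closure (e '' {n : ℕ | f (g (e n)) < x}ᶜ) = univ := by
        rw [← closure_union, ← image_union, union_compl_self, image_univ]
        exact hd.closure_eq
      calc (1 : ENNReal) = P univ := measure_univ.symm
        _ = P (closure (e '' {n : ℕ | f (g (e n)) < x}) ∪
            closure (e '' {n : ℕ | f (g (e n)) < x}ᶜ)) := by rw [hM]
        _ ≤ _ := measure_union_le _ _
    have hsum : P (closure (e '' {n : ℕ | f (g (e n)) < x})) +
        P (closure (e '' {n : ℕ | f (g (e n)) < x}ᶜ)) = 1 := by
      refine le_antisymm ?_ hcup
      calc P (closure (e '' {n : ℕ | f (g (e n)) < x})) +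
          P (closure (e '' {n : ℕ | f (g (e n)) < x}ᶜ))
          ≤ Ph (Iic x) + Ph (Ici x) := add_le_add hcl1up hcl2up
        _ = Ph (Iio x) + Ph (Ici x) := by rw [hPhIic x]
        _ = 1 := hsplit x
    refine ⟨hsum, ?_⟩
    have hval : P (closure (e '' {n : ℕ | f (g (e n)) < x})) = Ph (Iio x) := by
      refine le_antisymm ?_ hcl1low
      calc P (closure (e '' {n : ℕ | f (g (e n)) < x})) ≤ Ph (Iic x) := hcl1up
        _ = Ph (Iio x) := hPhIic x
    rw [hval]
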